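/- For every integer k ≥ 0, the augmented Čech complex 0 → R[kS ∩ Z^2] → R[x,y] ⊕ R[x^{-1},y] ⊕ R[x,y^{-1}] ⊕ R[x^{-1},y^{-1}] → R[x,x^{-1},y] ⊕ R[x,y,y^{-1}] ⊕ R[x^{-1},y,y^{-1}] ⊕ R[x,x^{-1},y^{-1}] → R[x,x^{-1},y,y^{-1}] → 0 is exact, where the first map is given by the column (x^k y^k, x^{-k} y^k, x^k y^{-k}, x^{-k} y^{-k}), the second by the matrix ((−x^{-k}, x^k, 0, 0),(y^{-k}, 0, −y^k, 0),(0, −y^{-k}, 0, y^k),(0, 0, x^{-k}, −x^k)), and the third by the row (y^{-k}, x^{-k}, x^k, y^k). -/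

import Mathlib

noncomputable section

variable (R : Type) [CommRing R]

/-- The Laurent polynomial ring `L = R[x,x⁻¹,y,y⁻¹]`, realised as the monoid algebra of
`ℤ × ℤ` over `R`.  Its various subrings (`R[x,y]`, `R[x,x⁻¹,y]`, ….) are cut out by support
conditions on the coefficients `f (i,j)` of the monomials `x^i y^j`. -/
abbrev L2 := AddMonoidAlgebra R (ℤ × ℤ)

/-- The monomial `x^a y^b ∈ L`. -/
noncomputable def mono (a b : ℤ) : L2 R := AddMonoidAlgebra.single (a, b) (1 : R)

/-- Membership in the subring `R[x,y]` (support in the first quadrant). -/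
def Qpp (f : L2 R) : Prop := ∀ i j : ℤ, i < 0 ∨ j < 0 → f.coeff (i, j) = 0
/-- Membership in the subring `R[x⁻¹,y]`. -/
def Qmp (f : L2 R) : Prop := ∀ i j : ℤ, 0 < i ∨ j < 0 → f.coeff (i, j) = 0
/-- Membership in the subring `R[x,y⁻¹]`. -/
def Qpm (f : L2 R) : Prop := ∀ i j : ℤ, i < 0 ∨ 0 < j → f.coeff (i, j) = 0
/-- Membership in the subring `R[x⁻¹,y⁻¹]`. -/
def Qmm (f : L2 R) : Prop := ∀ i j : ℤ, 0 < i ∨ 0 < j → f.coeff (i, j) = 0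
/-- Membership in the subring `R[x,x⁻¹,y]`. -/
def Hxy (f : L2 R) : Prop := ∀ i j : ℤ, j < 0 → f.coeff (i, j) = 0
/-- Membership in the subring `R[x,y,y⁻¹]`. -/
def Hyx (f : L2 R) : Prop := ∀ i j : ℤ, i < 0 → f.coeff (i, j) = 0
/-- Membership in the subring `R[x⁻¹,y,y⁻¹]`. -/
def Hym (f : L2 R) : Prop := ∀ i j : ℤ, 0 < i → f.coeff (i, j) = 0
/-- Membership in the subring `R[x,x⁻¹,y⁻¹]`. -/
def Hxm (f : L2 R) : Prop := ∀ i j : ℤ, 0 < j → f.coeff (i, j) = 0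
/-- Membership in the free `R`-module `R[kS ∩ ℤ²]` on the lattice points of the `k`-th
dilate of the square `S = [−1,1]²`, i.e. support in the box `[−k,k]²`. -/
def InBox (k : ℕ) (f : L2 R) : Prop :=
  ∀ i j : ℤ, i < -(k : ℤ) ∨ (k : ℤ) < i ∨ j < -(k : ℤ) ∨ (k : ℤ) < j → f.coeff (i, j) = 0

lemma mono_mul_apply (a b : ℤ) (f : L2 R) (i j : ℤ) :
    (mono R a b * f).coeff (i, j) = f.coeff (i - a, j - b) := by
  rw [mono, AddMonoidAlgebra.coeff_single_mul_apply, one_mul]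
  congr 1
  simp [Prod.ext_iff]
  constructor <;> ring

lemma mono_mul_mono (a b c d : ℤ) : mono R a b * mono R c d = mono R (a + c) (b + d) := by
  rw [mono, mono, mono, AddMonoidAlgebra.single_mul_single, one_mul, Prod.mk_add_mk]

lemma mono_zero : mono R 0 0 = 1 := by
  rw [mono, AddMonoidAlgebra.one_def]; rfl

lemma mono_congr {a b c d : ℤ} (h1 : a = c) (h2 : b = d) : mono R a b = mono R c d := by
  rw [h1, h2]

lemma mono_mul_congr (f : L2 R) {a b c d : ℤ} (h1 : a = c) (h2 : b = d) :
    mono R a b * f = mono R c d * f := by rw [h1, h2]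

lemma shift_eq (a b c d : ℤ) (f g : L2 R) (h : mono R a b * f = mono R c d * g) :
    f = mono R (c - a) (d - b) * g := by
  have h2 := congrArg (fun x => mono R (-a) (-b) * x) h
  rw [← mul_assoc, ← mul_assoc, mono_mul_mono, mono_mul_mono,
    mono_congr R (show -a + a = 0 by ring) (show -b + b = 0 by ring), mono_zero, one_mul,
    mono_mul_congr R g (show -a + c = c - a by ring) (show -b + d = d - b by ring)] at h2
  exact h2

open Finsupp in
/-- For every `k ≥ 0` the augmented Čech complex
`0 → R[kS ∩ ℤ²] → R[x,y] ⊕ R[x⁻¹,y] ⊕ R[x,y⁻¹] ⊕ R[x⁻¹,y⁻¹] →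
R[x,x⁻¹,y] ⊕ R[x,y,y⁻¹] ⊕ R[x⁻¹,y,y⁻¹] ⊕ R[x,x⁻¹,y⁻¹] → R[x,x⁻¹,y,y⁻¹] → 0`
is exact, where the maps are multiplication by the indicated powers of monomials (followed
by the inclusions), with matrices `d⁻¹ = (x^k y^k, x^{−k} y^k, x^k y^{−k}, x^{−k} y^{−k})ᵗ`,
`d⁰ = ((−x^{−k},x^k,0,0),(y^{−k},0,−y^k,0),(0,−y^{−k},0,y^k),(0,0,x^{−k},−x^k))` and
`d¹ = (y^{−k}, x^{−k}, x^k, y^k)`.  All four exactness assertions (injectivity of `d⁻¹`,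
`ker d⁰ = im d⁻¹`, `ker d¹ = im d⁰` and surjectivity of `d¹`) are stated elementwise inside
`L = R[x,x⁻¹,y,y⁻¹]`. -/
theorem cech_complex_of_square_exact (k : ℕ) :
    -- `d⁻¹` is injective:
    (∀ e : L2 R, InBox R k e →
      mono R k k * e = 0 ∧ mono R (-k) k * e = 0 ∧
        mono R k (-k) * e = 0 ∧ mono R (-k) (-k) * e = 0 → e = 0) ∧
    -- exactness at the quadrant spot: `ker d⁰ = im d⁻¹`:
    (∀ a b c d : L2 R, Qpp R a → Qmp R b → Qpm R c → Qmm R d →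
      (-(mono R (-k) 0 * a) + mono R k 0 * b = 0 ∧
       mono R 0 (-k) * a - mono R 0 k * c = 0 ∧
       -(mono R 0 (-k) * b) + mono R 0 k * d = 0 ∧
       mono R (-k) 0 * c - mono R k 0 * d = 0) →
      ∃ e : L2 R, InBox R k e ∧
        a = mono R k k * e ∧ b = mono R (-k) k * e ∧
        c = mono R k (-k) * e ∧ d = mono R (-k) (-k) * e) ∧
    -- exactness at the half-plane spot: `ker d¹ = im d⁰`:
    (∀ p q r s : L2 R, Hxy R p → Hyx R q → Hym R r → Hxm R s →
      mono R 0 (-k) * p + mono R (-k) 0 * q + mono R k 0 * r + mono R 0 k * s = 0 →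
      ∃ a b c d : L2 R, Qpp R a ∧ Qmp R b ∧ Qpm R c ∧ Qmm R d ∧
        p = -(mono R (-k) 0 * a) + mono R k 0 * b ∧
        q = mono R 0 (-k) * a - mono R 0 k * c ∧
        r = -(mono R 0 (-k) * b) + mono R 0 k * d ∧
        s = mono R (-k) 0 * c - mono R k 0 * d) ∧
    -- `d¹` is surjective:
    (∀ w : L2 R, ∃ p q r s : L2 R, Hxy R p ∧ Hyx R q ∧ Hym R r ∧ Hxm R s ∧
      w = mono R 0 (-k) * p + mono R (-k) 0 * q + mono R k 0 * r + mono R 0 k * s) := by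
  refine ⟨?_, ?_, ?_, ?_⟩
  · -- injectivity of d⁻¹
    rintro e _ ⟨h1, -, -, -⟩
    have h2 : mono R (k:ℤ) k * e = mono R 0 0 * (0 : L2 R) := by
      rw [h1, mono_zero, one_mul]
    have := shift_eq R k k 0 0 e 0 h2
    simpa using this
  · -- exactness at the quadrant spot
    rintro a b c d ha hb hc hd ⟨h1, h2, h3, h4⟩
    have hb' : b = mono R (-(k:ℤ) - k) (0 - 0) * a :=
      shift_eq R k 0 (-k) 0 b a (by linear_combination h1)
    have hc' : c = mono R (0 - 0 : ℤ) (-(k:ℤ) - k) * a :=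
      shift_eq R 0 k 0 (-k) c a (by linear_combination -h2)
    have hd0 : d = mono R (-(k:ℤ) - k) (0 - 0) * c :=
      shift_eq R k 0 (-k) 0 d c (by linear_combination -h4)
    have hd' : d = mono R (-(k:ℤ) - k + (0 - 0)) (0 - 0 + (-(k:ℤ) - k)) * a := by
      rw [hd0, hc', ← mul_assoc, mono_mul_mono]
    refine ⟨mono R (-k) (-k) * a, ?_, ?_, ?_, ?_, ?_⟩
    · intro i j hij
      rw [mono_mul_apply]
      rcases hij with h | h | h | h
      · exact ha _ _ (Or.inl (by omega))
      · have hB : b.coeff (i - k, j + k) = a.coeff (i - -(k:ℤ), j - -(k:ℤ)) := by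
          rw [hb', mono_mul_apply]
          congr 2 <;> ring
        rw [← hB]
        exact hb _ _ (Or.inl (by omega))
      · exact ha _ _ (Or.inr (by omega))
      · have hC : c.coeff (i + k, j - k) = a.coeff (i - -(k:ℤ), j - -(k:ℤ)) := by
          rw [hc', mono_mul_apply]
          congr 2 <;> ring
        rw [← hC]
        exact hc _ _ (Or.inr (by omega))
    · rw [← mul_assoc, mono_mul_mono,
        mono_congr R (show (k:ℤ) + -k = 0 by ring) (show (k:ℤ) + -k = 0 by ring),
        mono_zero, one_mul]
    · rw [← mul_assoc, mono_mul_mono, hb']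
      exact mono_mul_congr R a (by ring) (by ring)
    · rw [← mul_assoc, mono_mul_mono, hc']
      exact mono_mul_congr R a (by ring) (by ring)
    · rw [← mul_assoc, mono_mul_mono, hd']
      exact mono_mul_congr R a (by ring) (by ring)
  · -- exactness at the half-plane spot
    intro p q r s hp hq hr hs hco
    classical
    set p' : L2 R := mono R 0 (-k) * p with hp'def
    set q' : L2 R := mono R (-k) 0 * q with hq'def
    set r' : L2 R := mono R k 0 * r with hr'def
    set s' : L2 R := mono R 0 k * s with hs'def
    have hco' : ∀ i j : ℤ, p'.coeff (i, j) + q'.coeff (i, j) + r'.coeff (i, j) + s'.coeff (i, j) = 0 := by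
      intro i j
      have := congrArg (fun f : L2 R => f.coeff (i, j)) hco
      simpa using this
    have hp'c : ∀ i j : ℤ, p'.coeff (i, j) = p.coeff (i, j + k) := by
      intro i j; rw [hp'def, mono_mul_apply]; norm_num
    have hq'c : ∀ i j : ℤ, q'.coeff (i, j) = q.coeff (i + k, j) := by
      intro i j; rw [hq'def, mono_mul_apply]; norm_num
    have hr'c : ∀ i j : ℤ, r'.coeff (i, j) = r.coeff (i - k, j) := by
      intro i j; rw [hr'def, mono_mul_apply]; norm_num
    have hs'c : ∀ i j : ℤ, s'.coeff (i, j) = s.coeff (i, j - k) := by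
      intro i j; rw [hs'def, mono_mul_apply]; norm_num
    have hp'0 : ∀ i j : ℤ, j < -(k:ℤ) → p'.coeff (i, j) = 0 := fun i j h => by
      rw [hp'c]; exact hp _ _ (by omega)
    have hq'0 : ∀ i j : ℤ, i < -(k:ℤ) → q'.coeff (i, j) = 0 := fun i j h => by
      rw [hq'c]; exact hq _ _ (by omega)
    have hr'0 : ∀ i j : ℤ, (k:ℤ) < i → r'.coeff (i, j) = 0 := fun i j h => by
      rw [hr'c]; exact hr _ _ (by omega)
    have hs'0 : ∀ i j : ℤ, (k:ℤ) < j → s'.coeff (i, j) = 0 := fun i j h => by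
      rw [hs'c]; exact hs _ _ (by omega)
    set a' : L2 R :=
      -(AddMonoidAlgebra.ofCoeff (p'.coeff.filter (fun ij => (k:ℤ) < ij.1 ∧ -(k:ℤ) ≤ ij.2))) +
        AddMonoidAlgebra.ofCoeff (q'.coeff.filter (fun ij => -(k:ℤ) ≤ ij.1 ∧ ij.1 ≤ (k:ℤ) ∧ (k:ℤ) < ij.2)) with ha'def
    have ha'c : ∀ i j : ℤ, a'.coeff (i, j) =
        (if (k:ℤ) < i ∧ -(k:ℤ) ≤ j then -p'.coeff (i, j) else 0) +
        (if -(k:ℤ) ≤ i ∧ i ≤ (k:ℤ) ∧ (k:ℤ) < j then q'.coeff (i, j) else 0) := by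
      intro i j
      rw [ha'def]
      simp only [AddMonoidAlgebra.coeff_add, AddMonoidAlgebra.coeff_neg, AddMonoidAlgebra.coeff_ofCoeff,
        Finsupp.add_apply, Finsupp.neg_apply, Finsupp.filter_apply]
      split_ifs <;> ring
    set b' : L2 R := p' + a' with hb'def
    set c' : L2 R := a' - q' with hc'def
    set d' : L2 R := p' + r' + a' with hd'def
    have hb'c : ∀ i j : ℤ, b'.coeff (i, j) = p'.coeff (i, j) + a'.coeff (i, j) := by
      intro i j; rw [hb'def]; exact Finsupp.add_apply _ _ _
    have hc'c : ∀ i j : ℤ, c'.coeff (i, j) = a'.coeff (i, j) - q'.coeff (i, j) := by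
      intro i j; rw [hc'def]; exact Finsupp.sub_apply _ _ _
    have hd'c : ∀ i j : ℤ, d'.coeff (i, j) = p'.coeff (i, j) + r'.coeff (i, j) + a'.coeff (i, j) := by
      intro i j; rw [hd'def]; rw [AddMonoidAlgebra.coeff_add, AddMonoidAlgebra.coeff_add, Finsupp.add_apply, Finsupp.add_apply]
    refine ⟨mono R k k * a', mono R (-k) k * b', mono R k (-k) * c', mono R (-k) (-k) * d',
      ?_, ?_, ?_, ?_, ?_, ?_, ?_, ?_⟩
    · -- Qpp a
      intro i j hij
      rw [mono_mul_apply, ha'c]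
      rcases hij with h | h
      · rw [if_neg (by omega), if_neg (by omega)]; ring
      · rw [if_neg (by omega), if_neg (by omega)]; ring
    · -- Qmp b
      intro i j hij
      rw [mono_mul_apply, hb'c, ha'c]
      rcases hij with h | h
      · by_cases hj : -(k:ℤ) ≤ j - k
        · rw [if_pos ⟨by omega, hj⟩, if_neg (by omega)]; ring
        · rw [if_neg (by omega), if_neg (by omega), hp'0 _ _ (by omega)]; ring
      · rw [if_neg (by omega), if_neg (by omega), hp'0 _ _ (by omega)]; ring
    · -- Qpm c
      intro i j hij
      rw [mono_mul_apply, hc'c, ha'c]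
      rcases hij with h | h
      · rw [if_neg (by omega), if_neg (by omega), hq'0 _ _ (by omega)]; ring
      · by_cases hi1 : (k:ℤ) < i - k
        · rw [if_pos ⟨hi1, by omega⟩, if_neg (by omega)]
          have hX := hco' (i - k) (j + k)
          rw [hr'0 _ _ (by omega), hs'0 _ _ (by omega)] at hX
          have : j - -(k:ℤ) = j + k := by ring
          rw [this]
          linear_combination -hX
        · by_cases hi2 : -(k:ℤ) ≤ i - k
          · rw [if_neg (by omega), if_pos ⟨hi2, by omega, by omega⟩]; ring
          · rw [if_neg (by omega), if_neg (by omega), hq'0 _ _ (by omega)]; ring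
    · -- Qmm d
      intro i j hij
      rw [mono_mul_apply, hd'c, ha'c]
      rcases hij with h | h
      · by_cases hj : -(k:ℤ) ≤ j - -(k:ℤ)
        · rw [if_pos ⟨by omega, hj⟩, if_neg (by omega), hr'0 _ _ (by omega)]; ring
        · rw [if_neg (by omega), if_neg (by omega), hp'0 _ _ (by omega),
            hr'0 _ _ (by omega)]; ring
      · by_cases hi1 : (k:ℤ) < i - -(k:ℤ)
        · rw [if_pos ⟨hi1, by omega⟩, if_neg (by omega), hr'0 _ _ (by omega)]; ring
        · by_cases hi2 : -(k:ℤ) ≤ i - -(k:ℤ)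
          · rw [if_neg (by omega), if_pos ⟨hi2, by omega, by omega⟩]
            have hX := hco' (i - -(k:ℤ)) (j - -(k:ℤ))
            rw [hs'0 _ _ (by omega)] at hX
            linear_combination hX
          · rw [if_neg (by omega), if_neg (by omega)]
            have hX := hco' (i - -(k:ℤ)) (j - -(k:ℤ))
            rw [hq'0 _ _ (by omega), hs'0 _ _ (by omega)] at hX
            linear_combination hX
    · -- p equation
      have hba : b' - a' = p' := by rw [hb'def]; ring
      have e1 : -(mono R (-k) 0 * (mono R k k * a')) + mono R k 0 * (mono R (-k) k * b')
          = mono R 0 k * (b' - a') := by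
        rw [← mul_assoc, ← mul_assoc, mono_mul_mono, mono_mul_mono,
          mono_congr R (show -(k:ℤ) + k = 0 by ring) (show (0:ℤ) + k = k by ring),
          mono_congr R (show (k:ℤ) + -k = 0 by ring) (show (0:ℤ) + k = k by ring)]
        ring
      rw [e1, hba, hp'def, ← mul_assoc, mono_mul_mono,
        mono_congr R (show (0:ℤ) + 0 = 0 by ring) (show (k:ℤ) + -k = 0 by ring),
        mono_zero, one_mul]
    · -- q equation
      have hac : a' - c' = q' := by rw [hc'def]; ring
      have e1 : mono R 0 (-k) * (mono R k k * a') - mono R 0 k * (mono R k (-k) * c')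
          = mono R k 0 * (a' - c') := by
        rw [← mul_assoc, ← mul_assoc, mono_mul_mono, mono_mul_mono,
          mono_congr R (show (0:ℤ) + k = k by ring) (show -(k:ℤ) + k = 0 by ring),
          mono_congr R (show (0:ℤ) + k = k by ring) (show (k:ℤ) + -k = 0 by ring)]
        ring
      rw [e1, hac, hq'def, ← mul_assoc, mono_mul_mono,
        mono_congr R (show (k:ℤ) + -k = 0 by ring) (show (0:ℤ) + 0 = 0 by ring),
        mono_zero, one_mul]
    · -- r equation
      have hdb : d' - b' = r' := by rw [hd'def, hb'def]; ring
      have e1 : -(mono R 0 (-k) * (mono R (-k) k * b')) + mono R 0 k * (mono R (-k) (-k) * d')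
          = mono R (-k) 0 * (d' - b') := by
        rw [← mul_assoc, ← mul_assoc, mono_mul_mono, mono_mul_mono,
          mono_congr R (show (0:ℤ) + -k = -k by ring) (show -(k:ℤ) + k = 0 by ring),
          mono_congr R (show (0:ℤ) + -k = -k by ring) (show (k:ℤ) + -k = 0 by ring)]
        ring
      rw [e1, hdb, hr'def, ← mul_assoc, mono_mul_mono,
        mono_congr R (show -(k:ℤ) + k = 0 by ring) (show (0:ℤ) + 0 = 0 by ring),
        mono_zero, one_mul]
    · -- s equation
      have hcd : c' - d' = s' := by
        rw [hc'def, hd'def]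
        linear_combination -hco
      have e1 : mono R (-k) 0 * (mono R k (-k) * c') - mono R k 0 * (mono R (-k) (-k) * d')
          = mono R 0 (-k) * (c' - d') := by
        rw [← mul_assoc, ← mul_assoc, mono_mul_mono, mono_mul_mono,
          mono_congr R (show -(k:ℤ) + k = 0 by ring) (show (0:ℤ) + -k = -k by ring),
          mono_congr R (show (k:ℤ) + -k = 0 by ring) (show (0:ℤ) + -k = -k by ring)]
        ring
      rw [e1, hcd, hs'def, ← mul_assoc, mono_mul_mono,
        mono_congr R (show (0:ℤ) + 0 = 0 by ring) (show -(k:ℤ) + k = 0 by ring),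
        mono_zero, one_mul]
  · -- surjectivity of d¹
    intro w
    classical
    refine ⟨AddMonoidAlgebra.ofCoeff ((mono R 0 k * w).coeff.filter (fun ij => (k:ℤ) ≤ ij.2)), 0, 0,
      AddMonoidAlgebra.ofCoeff ((mono R 0 (-k) * w).coeff.filter (fun ij => ij.2 < -(k:ℤ))), ?_, ?_, ?_, ?_, ?_⟩
    · intro i j h
      rw [AddMonoidAlgebra.coeff_ofCoeff, Finsupp.filter_apply, if_neg (by omega)]
    · intro i j _; simp
    · intro i j _; simp
    · intro i j h
      rw [AddMonoidAlgebra.coeff_ofCoeff, Finsupp.filter_apply, if_neg (by omega)]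
    · ext ij
      obtain ⟨i, j⟩ := ij
      simp only [mul_zero, add_zero, zero_add, Finsupp.add_apply]
      rw [AddMonoidAlgebra.coeff_add, Finsupp.add_apply, mono_mul_apply, mono_mul_apply,
        AddMonoidAlgebra.coeff_ofCoeff, AddMonoidAlgebra.coeff_ofCoeff, Finsupp.filter_apply,
        Finsupp.filter_apply, mono_mul_apply, mono_mul_apply]
      by_cases hj : (0:ℤ) ≤ j
      · rw [if_pos (by omega : (k:ℤ) ≤ j - -(k:ℤ)), if_neg (by omega), add_zero]
        norm_num
      · rw [if_neg (by omega), if_pos (by omega : (j:ℤ) - k < -(k:ℤ)), zero_add]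
        norm_num
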